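/- arXiv:2102.12646 — 3 statements merged into one kernel-verified Lean document; each statement's English description precedes it below -/
import Mathlib

section
/- With the bipartite construction of G and A: for every index set S ⊆ F ⊕ F, one has [det(A_S) ≠ 0 and S induces a spanning tree of G] if and only if [S contains all right edge indices Sum.inr (i,j) for (i,j) ∈ F, and the set M = {(i,j) ∈ F : Sum.inl (i,j) ∈ S} is a perfect matching, i.e., for every i ∈ Fin n there is exactly one j with (i,j) ∈ M and for every j ∈ Fin n there is exactly one i with (i,j) ∈ M]. -/
/-- The principal minor of `A` on the index set `S` (equal to `1` when `S = ∅`). -/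
noncomputable def principalMinor {ι : Type*} [DecidableEq ι]
    (A : Matrix ι ι ℝ) (S : Finset ι) : ℝ :=
  (A.submatrix (fun i : ↥S => (i : ι)) (fun i : ↥S => (i : ι))).det

/-- The edge of the graph `G` associated with an edge index in `F ⊕ F`:
the left edge `{u_i, u_i w_j}` and the right edge `{u_i w_j, u_{i+1}}`. -/
def bipEdge {n : ℕ} (F : Finset (Fin n × Fin n)) :
    (↥F ⊕ ↥F) → Sym2 (Fin (n + 1) ⊕ ↥F)
  | Sum.inl e => s(Sum.inl (e : Fin n × Fin n).1.castSucc, Sum.inr e)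
  | Sum.inr e => s(Sum.inr e, Sum.inl (e : Fin n × Fin n).1.succ)

/-- The spanning subgraph of `G` whose edges are those indexed by `S ⊆ F ⊕ F`. -/
def bipSubgraph {n : ℕ} (F : Finset (Fin n × Fin n)) (S : Finset (↥F ⊕ ↥F)) :
    SimpleGraph (Fin (n + 1) ⊕ ↥F) :=
  SimpleGraph.fromEdgeSet (bipEdge F '' ↑S)

/-- The matrix `A` of the construction: the left-left block records equality of the
second coordinates, the right-right block is the identity, the off-diagonal blocks vanish. -/
def bipMatrix {n : ℕ} (F : Finset (Fin n × Fin n)) : Matrix (↥F ⊕ ↥F) (↥F ⊕ ↥F) ℝ :=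
  Matrix.of fun p q =>
    match p, q with
    | Sum.inl e₁, Sum.inl e₂ =>
        if (e₁ : Fin n × Fin n).2 = (e₂ : Fin n × Fin n).2 then 1 else 0
    | Sum.inr e, Sum.inr e' => if e = e' then 1 else 0
    | _, _ => 0


variable {n : ℕ} {F : Finset (Fin n × Fin n)} {S : Finset (↥F ⊕ ↥F)}

lemma reach_invariant {V : Type*} {G : SimpleGraph V} (P : V → Prop)
    (h : ∀ a b, G.Adj a b → (P a ↔ P b)) {a b : V} (hr : G.Reachable a b) : (P a ↔ P b) := by
  obtain ⟨w⟩ := hr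
  induction w with
  | nil => rfl
  | cons h' _ ih => exact (h _ _ h').trans ih

lemma bip_adj {a b : Fin (n+1) ⊕ ↥F} :
    (bipSubgraph F S).Adj a b ↔ (∃ x ∈ S, bipEdge F x = s(a,b)) ∧ a ≠ b := by
  simp [bipSubgraph, SimpleGraph.fromEdgeSet_adj, Set.mem_image]

lemma adj_left (e : ↥F) (h : Sum.inl e ∈ S) :
    (bipSubgraph F S).Adj (Sum.inl (e : Fin n × Fin n).1.castSucc) (Sum.inr e) :=
  bip_adj.mpr ⟨⟨Sum.inl e, h, rfl⟩, by simp⟩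

lemma adj_right (e : ↥F) (h : Sum.inr e ∈ S) :
    (bipSubgraph F S).Adj (Sum.inr e) (Sum.inl (e : Fin n × Fin n).1.succ) :=
  bip_adj.mpr ⟨⟨Sum.inr e, h, rfl⟩, by simp⟩

lemma bipEdge_inj : Function.Injective (bipEdge F) := by
  rintro (e|e) (f|f) h <;> simp only [bipEdge, Sym2.eq_iff] at h
  · rcases h with ⟨-, h⟩|⟨h, -⟩
    · simpa using h
    · simp at h
  · rcases h with ⟨h, -⟩|⟨h₁, h₂⟩
    · simp at h
    · exfalso
      simp only [Sum.inl.injEq, Sum.inr.injEq] at h₁ h₂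
      subst h₂
      exact absurd h₁ (Fin.castSucc_lt_succ).ne
  · rcases h with ⟨h, -⟩|⟨h₁, h₂⟩
    · simp at h
    · exfalso
      simp only [Sum.inl.injEq, Sum.inr.injEq] at h₁ h₂
      subst h₁
      exact absurd h₂ (Fin.castSucc_lt_succ).ne.symm
  · rcases h with ⟨h, -⟩|⟨h, -⟩
    · simpa using h
    · simp at h

lemma bip_edgeSet : (bipSubgraph F S).edgeSet = ↑(S.image (bipEdge F)) := by
  rw [bipSubgraph, SimpleGraph.edgeSet_fromEdgeSet, Finset.coe_image]
  ext e
  simp only [Set.mem_diff, Set.mem_setOf_eq, and_iff_left_iff_imp]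
  rintro ⟨x, -, rfl⟩
  cases x <;> simp [bipEdge, Sym2.isDiag_iff_proj_eq]

lemma bip_adj_cases {a b : Fin (n+1) ⊕ ↥F} (h : (bipSubgraph F S).Adj a b) :
    (∃ e : ↥F, Sum.inl e ∈ S ∧
      ((a = Sum.inl (e : Fin n × Fin n).1.castSucc ∧ b = Sum.inr e) ∨
       (b = Sum.inl (e : Fin n × Fin n).1.castSucc ∧ a = Sum.inr e))) ∨
    (∃ e : ↥F, Sum.inr e ∈ S ∧
      ((a = Sum.inr e ∧ b = Sum.inl (e : Fin n × Fin n).1.succ) ∨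
       (b = Sum.inr e ∧ a = Sum.inl (e : Fin n × Fin n).1.succ))) := by
  rw [bip_adj] at h
  obtain ⟨⟨x, hx, hxe⟩, -⟩ := h
  cases x with
  | inl e =>
    left
    refine ⟨e, hx, ?_⟩
    rcases Sym2.eq_iff.mp hxe with ⟨h1, h2⟩|⟨h1, h2⟩
    · exact Or.inl ⟨h1.symm, h2.symm⟩
    · exact Or.inr ⟨h1.symm, h2.symm⟩
  | inr e =>
    right
    refine ⟨e, hx, ?_⟩
    rcases Sym2.eq_iff.mp hxe with ⟨h1, h2⟩|⟨h1, h2⟩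
    · exact Or.inl ⟨h1.symm, h2.symm⟩
    · exact Or.inr ⟨h1.symm, h2.symm⟩

lemma card_split : S.card =
    (Finset.univ.filter (fun e : ↥F => Sum.inl e ∈ S)).card +
    (Finset.univ.filter (fun e : ↥F => Sum.inr e ∈ S)).card := by
  classical
  have hS : S = (Finset.univ.filter (fun e : ↥F => Sum.inl e ∈ S)).image Sum.inl ∪
      (Finset.univ.filter (fun e : ↥F => Sum.inr e ∈ S)).image Sum.inr := by
    ext (e|e) <;> simp
  conv_lhs => rw [hS]
  rw [Finset.card_union_of_disjoint (by simp [Finset.disjoint_left]),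
    Finset.card_image_of_injective _ Sum.inl_injective,
    Finset.card_image_of_injective _ Sum.inr_injective]

lemma bip_card_edges [Fintype ((bipSubgraph F S).edgeSet)] :
    (bipSubgraph F S).edgeFinset.card = S.card := by
  classical
  have h : (bipSubgraph F S).edgeFinset = S.image (bipEdge F) := by
    apply Finset.coe_injective
    rw [SimpleGraph.coe_edgeFinset, bip_edgeSet]
  rw [h, Finset.card_image_of_injective _ bipEdge_inj]

lemma minor_eq_one
    (hmatch : ∀ e₁ e₂ : ↥F, Sum.inl e₁ ∈ S → Sum.inl e₂ ∈ S →
      (e₁ : Fin n × Fin n).2 = (e₂ : Fin n × Fin n).2 → e₁ = e₂) :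
    principalMinor (bipMatrix F) S = 1 := by
  classical
  rw [principalMinor]
  have h : (bipMatrix F).submatrix (fun i : ↥S => (i : ↥F ⊕ ↥F))
      (fun i : ↥S => (i : ↥F ⊕ ↥F)) = 1 := by
    ext ⟨p, hp⟩ ⟨q, hq⟩
    rw [Matrix.submatrix_apply, Matrix.one_apply]
    match p, q with
    | Sum.inl e₁, Sum.inl e₂ =>
      simp only [bipMatrix, Matrix.of_apply, Subtype.mk.injEq, Sum.inl.injEq]
      by_cases hj : (e₁ : Fin n × Fin n).2 = (e₂ : Fin n × Fin n).2
      · rw [if_pos hj, if_pos (hmatch e₁ e₂ hp hq hj)]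
      · rw [if_neg hj, if_neg (fun h => hj (by rw [h]))]
    | Sum.inl e₁, Sum.inr e₂ =>
      simp [bipMatrix]
    | Sum.inr e₁, Sum.inl e₂ =>
      simp [bipMatrix]
    | Sum.inr e₁, Sum.inr e₂ =>
      simp only [bipMatrix, Matrix.of_apply, Subtype.mk.injEq, Sum.inr.injEq]
  rw [h, Matrix.det_one]

lemma minor_eq_zero {e₁ e₂ : ↥F} (h₁ : Sum.inl e₁ ∈ S) (h₂ : Sum.inl e₂ ∈ S)
    (hne : e₁ ≠ e₂) (hj : (e₁ : Fin n × Fin n).2 = (e₂ : Fin n × Fin n).2) :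
    principalMinor (bipMatrix F) S = 0 := by
  classical
  rw [principalMinor]
  apply Matrix.det_zero_of_row_eq (i := ⟨Sum.inl e₁, h₁⟩) (j := ⟨Sum.inl e₂, h₂⟩)
  · simp [Subtype.ext_iff, hne]
  · funext ⟨q, hq⟩
    match q with
    | Sum.inl f => simp [bipMatrix, hj]
    | Sum.inr f => simp [bipMatrix]

lemma bip_connected (hR : ∀ e : ↥F, Sum.inr e ∈ S)
    (hex : ∀ i : Fin n, ∃ e : ↥F, (e : Fin n × Fin n).1 = i ∧ Sum.inl e ∈ S) :
    (bipSubgraph F S).Connected := by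
  have hu : ∀ i : Fin (n+1), (bipSubgraph F S).Reachable (Sum.inl 0) (Sum.inl i) := by
    intro i
    induction i using Fin.induction with
    | zero => exact SimpleGraph.Reachable.refl _
    | succ i ih =>
      obtain ⟨e, he1, heS⟩ := hex i
      subst he1
      exact ih.trans ((adj_left e heS).reachable.trans (adj_right e (hR e)).reachable)
  have hall : ∀ v : Fin (n+1) ⊕ ↥F, (bipSubgraph F S).Reachable (Sum.inl 0) v := by
    rintro (i|e)
    · exact hu i
    · exact (hu _).trans (adj_right e (hR e)).reachable.symm
  exact ⟨fun a b => (hall a).symm.trans (hall b)⟩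

lemma bip_acyclic (hR : ∀ e : ↥F, Sum.inr e ∈ S)
    (hinj : ∀ e₁ e₂ : ↥F, Sum.inl e₁ ∈ S → Sum.inl e₂ ∈ S →
      (e₁ : Fin n × Fin n).1 = (e₂ : Fin n × Fin n).1 → e₁ = e₂) :
    (bipSubgraph F S).IsAcyclic := by
  rw [SimpleGraph.isAcyclic_iff_forall_adj_isBridge]
  intro v w hadj
  rw [SimpleGraph.isBridge_iff]
  intro hreach
  obtain ⟨⟨x, hxS, hxe⟩, hvw⟩ := bip_adj.mp hadj
  -- the deleted graph
  set G' := bipSubgraph F S \ SimpleGraph.fromEdgeSet {s(v, w)} with hG'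
  have hadj' : ∀ a b : Fin (n+1) ⊕ ↥F, G'.Adj a b →
      (bipSubgraph F S).Adj a b ∧ s(a, b) ≠ s(v, w) := by
    intro a b h
    rw [hG', SimpleGraph.sdiff_adj, SimpleGraph.fromEdgeSet_adj] at h
    exact ⟨h.1, fun hh => h.2 ⟨by simp [hh], h.1.ne⟩⟩
  -- helper to rule out equal edges
  cases x with
  | inl e =>
    -- invariant for deleting the left edge of e
    set P : Fin (n+1) ⊕ ↥F → Prop := fun z =>
      match z with
      | Sum.inl u => (u : ℕ) ≤ ((e : Fin n × Fin n).1 : ℕ)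
      | Sum.inr f => ((f : Fin n × Fin n).1 : ℕ) < ((e : Fin n × Fin n).1 : ℕ) with hP
    have hpres : ∀ a b, G'.Adj a b → (P a ↔ P b) := by
      intro a b hab
      obtain ⟨hGab, hne⟩ := hadj' a b hab
      rcases bip_adj_cases hGab with ⟨f, hfS, hor⟩ | ⟨f, hfS, hor⟩
      · have hfe : f ≠ e := by
          rintro rfl
          apply hne
          rw [← hxe]
          rcases hor with ⟨rfl, rfl⟩ | ⟨rfl, rfl⟩
          · rfl
          · exact Sym2.eq_swap
        have hfe1 : ((f : Fin n × Fin n).1 : ℕ) ≠ ((e : Fin n × Fin n).1 : ℕ) :=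
          fun h => hfe (hinj f e hfS hxS (Fin.val_injective h))
        have key : P (Sum.inl (f : Fin n × Fin n).1.castSucc) ↔ P (Sum.inr f) := by
          simp only [hP, Fin.coe_castSucc]
          omega
        rcases hor with ⟨rfl, rfl⟩ | ⟨rfl, rfl⟩
        · exact key
        · exact key.symm
      · have key : P (Sum.inr f) ↔ P (Sum.inl (f : Fin n × Fin n).1.succ) := by
          simp only [hP, Fin.val_succ]
          omega
        rcases hor with ⟨rfl, rfl⟩ | ⟨rfl, rfl⟩
        · exact key
        · exact key.symm
    have hiff := reach_invariant P hpres hreach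
    have hPvw : ¬ (P v ↔ P w) := by
      rcases Sym2.eq_iff.mp hxe.symm with ⟨rfl, rfl⟩ | ⟨rfl, rfl⟩
      · simp only [hP, bipEdge, Fin.coe_castSucc]
        omega
      · simp only [hP, bipEdge, Fin.coe_castSucc]
        omega
    exact hPvw hiff
  | inr e =>
    by_cases hL : Sum.inl e ∈ S
    · set P : Fin (n+1) ⊕ ↥F → Prop := fun z =>
        match z with
        | Sum.inl u => ((e : Fin n × Fin n).1 : ℕ) + 1 ≤ (u : ℕ)
        | Sum.inr f => ((e : Fin n × Fin n).1 : ℕ) ≤ ((f : Fin n × Fin n).1 : ℕ) ∧ f ≠ e with hP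
      have hpres : ∀ a b, G'.Adj a b → (P a ↔ P b) := by
        intro a b hab
        obtain ⟨hGab, hne⟩ := hadj' a b hab
        rcases bip_adj_cases hGab with ⟨f, hfS, hor⟩ | ⟨f, hfS, hor⟩
        · have key : P (Sum.inl (f : Fin n × Fin n).1.castSucc) ↔ P (Sum.inr f) := by
            by_cases hfe : f = e
            · subst hfe
              simp only [hP, Fin.coe_castSucc, ne_eq, not_true_eq_false, and_false, iff_false]
              omega
            · have hfe1 : ((f : Fin n × Fin n).1 : ℕ) ≠ ((e : Fin n × Fin n).1 : ℕ) :=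
                fun h => hfe (hinj f e hfS hL (Fin.val_injective h))
              simp only [hP, Fin.coe_castSucc, hfe, ne_eq, not_false_eq_true, and_true]
              omega
          rcases hor with ⟨rfl, rfl⟩ | ⟨rfl, rfl⟩
          · exact key
          · exact key.symm
        · have hfe : f ≠ e := by
            rintro rfl
            apply hne
            rw [← hxe]
            rcases hor with ⟨rfl, rfl⟩ | ⟨rfl, rfl⟩
            · rfl
            · exact Sym2.eq_swap
          have key : P (Sum.inr f) ↔ P (Sum.inl (f : Fin n × Fin n).1.succ) := by
            simp only [hP, Fin.val_succ, hfe, ne_eq, not_false_eq_true, and_true]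
            omega
          rcases hor with ⟨rfl, rfl⟩ | ⟨rfl, rfl⟩
          · exact key
          · exact key.symm
      have hiff := reach_invariant P hpres hreach
      have hPvw : ¬ (P v ↔ P w) := by
        rcases Sym2.eq_iff.mp hxe.symm with ⟨rfl, rfl⟩ | ⟨rfl, rfl⟩
        · simp only [hP, bipEdge, Fin.val_succ, ne_eq, not_true_eq_false, and_false, false_iff,
            not_le]
          omega
        · simp only [hP, bipEdge, Fin.val_succ, ne_eq, not_true_eq_false, and_false, iff_false,
            not_le]
          omega
      exact hPvw hiff
    · set P : Fin (n+1) ⊕ ↥F → Prop := fun z => z ≠ Sum.inr e with hP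
      have hpres : ∀ a b, G'.Adj a b → (P a ↔ P b) := by
        intro a b hab
        obtain ⟨hGab, hne⟩ := hadj' a b hab
        rcases bip_adj_cases hGab with ⟨f, hfS, hor⟩ | ⟨f, hfS, hor⟩
        · have hfe : f ≠ e := fun h => hL (h ▸ hfS)
          rcases hor with ⟨rfl, rfl⟩ | ⟨rfl, rfl⟩ <;>
            simp [hP, hfe]
        · have hfe : f ≠ e := by
            rintro rfl
            apply hne
            rw [← hxe]
            rcases hor with ⟨rfl, rfl⟩ | ⟨rfl, rfl⟩
            · rfl
            · exact Sym2.eq_swap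
          rcases hor with ⟨rfl, rfl⟩ | ⟨rfl, rfl⟩ <;>
            simp [hP, hfe]
      have hiff := reach_invariant P hpres hreach
      have hPvw : ¬ (P v ↔ P w) := by
        rcases Sym2.eq_iff.mp hxe.symm with ⟨rfl, rfl⟩ | ⟨rfl, rfl⟩ <;>
          simp [hP]
      exact hPvw hiff

/-- An index set `S ⊆ F ⊕ F` satisfies `det (A_S) ≠ 0` and induces a spanning tree of `G`
iff `S` contains all right edge indices and `{(i,j) ∈ F : Sum.inl (i,j) ∈ S}` is a perfect
matching of the bipartite graph `(U, W; F)`. -/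
theorem bip_spanningTree_iff_perfectMatching {n : ℕ} (hn : 1 ≤ n)
    (F : Finset (Fin n × Fin n)) (S : Finset (↥F ⊕ ↥F)) :
    (principalMinor (bipMatrix F) S ≠ 0 ∧ (bipSubgraph F S).IsTree) ↔
      ((∀ e : ↥F, Sum.inr e ∈ S) ∧
        (∀ i : Fin n, ∃! j : Fin n, ∃ h : (i, j) ∈ F, Sum.inl (⟨(i, j), h⟩ : ↥F) ∈ S) ∧
        (∀ j : Fin n, ∃! i : Fin n, ∃ h : (i, j) ∈ F, Sum.inl (⟨(i, j), h⟩ : ↥F) ∈ S)) := by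
  classical
  haveI : Fintype ((bipSubgraph F S).edgeSet) := (Set.toFinite _).fintype
  constructor
  · rintro ⟨hdet, hT⟩
    -- injectivity of the second coordinate on the left part of S
    have hjinj : ∀ e₁ e₂ : ↥F, Sum.inl e₁ ∈ S → Sum.inl e₂ ∈ S →
        (e₁ : Fin n × Fin n).2 = (e₂ : Fin n × Fin n).2 → e₁ = e₂ := by
      intro e₁ e₂ h₁ h₂ hj
      by_contra hne
      exact hdet (minor_eq_zero h₁ h₂ hne hj)
    -- counting
    set SL := Finset.univ.filter (fun e : ↥F => Sum.inl e ∈ S) with hSLdef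
    set SR := Finset.univ.filter (fun e : ↥F => Sum.inr e ∈ S) with hSRdef
    have hcard := hT.card_edgeFinset
    rw [bip_card_edges] at hcard
    have hV : Fintype.card (Fin (n+1) ⊕ ↥F) = (n+1) + F.card := by
      simp [Fintype.card_sum]
    rw [hV] at hcard
    have hsplit : S.card = SL.card + SR.card := card_split
    have hjinj' : Set.InjOn (fun e : ↥F => (e : Fin n × Fin n).2) ↑SL := by
      intro a ha b hb hab
      exact hjinj a b (by simpa [hSLdef] using ha) (by simpa [hSLdef] using hb) hab
    have hSL_le : SL.card ≤ n := by
      have h := Finset.card_le_card_of_injOn (t := (Finset.univ : Finset (Fin n)))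
        (fun e : ↥F => (e : Fin n × Fin n).2)
        (fun a _ => Finset.mem_univ _) hjinj'
      simpa using h
    have hSR_le : SR.card ≤ F.card := by
      have := Finset.card_le_univ SR
      simpa [Fintype.card_coe] using this
    have hSL : SL.card = n := by omega
    have hSR : SR.card = F.card := by omega
    have hRall : ∀ e : ↥F, Sum.inr e ∈ S := by
      have huniv : SR = Finset.univ :=
        Finset.eq_univ_of_card SR (by rw [hSR, Fintype.card_coe])
      intro e
      have : e ∈ SR := huniv ▸ Finset.mem_univ e
      simpa [hSRdef] using this
    -- injectivity of the first coordinate, via uniqueness of paths in a tree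
    have hiinj : ∀ e₁ e₂ : ↥F, Sum.inl e₁ ∈ S → Sum.inl e₂ ∈ S →
        (e₁ : Fin n × Fin n).1 = (e₂ : Fin n × Fin n).1 → e₁ = e₂ := by
      intro e₁ e₂ h₁ h₂ hi
      by_contra hne
      set i := (e₁ : Fin n × Fin n).1 with hidef
      have a1 : (bipSubgraph F S).Adj (Sum.inl i.castSucc) (Sum.inr e₁) := adj_left e₁ h₁
      have b1 : (bipSubgraph F S).Adj (Sum.inr e₁) (Sum.inl i.succ) :=
        adj_right e₁ (hRall e₁)
      have a2 : (bipSubgraph F S).Adj (Sum.inl i.castSucc) (Sum.inr e₂) := by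
        rw [hi]; exact adj_left e₂ h₂
      have b2 : (bipSubgraph F S).Adj (Sum.inr e₂) (Sum.inl i.succ) := by
        rw [hi]; exact adj_right e₂ (hRall e₂)
      set w₁ : (bipSubgraph F S).Walk (Sum.inl i.castSucc) (Sum.inl i.succ) :=
        SimpleGraph.Walk.cons a1 b1.toWalk with hw₁
      set w₂ : (bipSubgraph F S).Walk (Sum.inl i.castSucc) (Sum.inl i.succ) :=
        SimpleGraph.Walk.cons a2 b2.toWalk with hw₂
      have hp₁ : w₁.IsPath := by
        rw [SimpleGraph.Walk.isPath_def]
        simp [hw₁, SimpleGraph.Adj.toWalk, (Fin.castSucc_lt_succ (i := i)).ne]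
      have hp₂ : w₂.IsPath := by
        rw [SimpleGraph.Walk.isPath_def]
        simp [hw₂, SimpleGraph.Adj.toWalk, (Fin.castSucc_lt_succ (i := i)).ne]
      have huniq := hT.existsUnique_path (Sum.inl i.castSucc) (Sum.inl i.succ)
      have hw : w₁ = w₂ := huniq.unique hp₁ hp₂
      have hsup := congrArg SimpleGraph.Walk.support hw
      simp [hw₁, hw₂, SimpleGraph.Adj.toWalk] at hsup
      exact hne hsup
    -- surjectivity of both coordinates
    have hex_i : ∀ i : Fin n, ∃ e : ↥F, Sum.inl e ∈ S ∧ (e : Fin n × Fin n).1 = i := by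
      have himg : SL.image (fun e : ↥F => (e : Fin n × Fin n).1) = Finset.univ := by
        apply Finset.eq_univ_of_card
        have hiinj' : Set.InjOn (fun e : ↥F => (e : Fin n × Fin n).1) ↑SL := by
          intro a ha b hb hab
          exact hiinj a b (by simpa [hSLdef] using ha) (by simpa [hSLdef] using hb) hab
        rw [Finset.card_image_of_injOn hiinj', hSL]
        simp
      intro i
      have : i ∈ SL.image (fun e : ↥F => (e : Fin n × Fin n).1) :=
        himg ▸ Finset.mem_univ i
      obtain ⟨e, he, hei⟩ := Finset.mem_image.mp this
      exact ⟨e, by simpa [hSLdef] using he, hei⟩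
    have hex_j : ∀ j : Fin n, ∃ e : ↥F, Sum.inl e ∈ S ∧ (e : Fin n × Fin n).2 = j := by
      have himg : SL.image (fun e : ↥F => (e : Fin n × Fin n).2) = Finset.univ := by
        apply Finset.eq_univ_of_card
        rw [Finset.card_image_of_injOn hjinj', hSL]
        simp
      intro j
      have : j ∈ SL.image (fun e : ↥F => (e : Fin n × Fin n).2) :=
        himg ▸ Finset.mem_univ j
      obtain ⟨e, he, hej⟩ := Finset.mem_image.mp this
      exact ⟨e, by simpa [hSLdef] using he, hej⟩
    refine ⟨hRall, fun i => ?_, fun j => ?_⟩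
    · obtain ⟨⟨⟨i', j⟩, hf⟩, hS', hi'⟩ := hex_i i
      simp only at hi'
      subst hi'
      refine ⟨j, ⟨hf, hS'⟩, ?_⟩
      rintro j' ⟨hf', hS''⟩
      have := hiinj ⟨(i', j'), hf'⟩ ⟨(i', j), hf⟩ hS'' hS' rfl
      exact congrArg (fun e : ↥F => (e : Fin n × Fin n).2) this
    · obtain ⟨⟨⟨i, j'⟩, hf⟩, hS', hj'⟩ := hex_j j
      simp only at hj'
      subst hj'
      refine ⟨i, ⟨hf, hS'⟩, ?_⟩
      rintro i' ⟨hf', hS''⟩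
      have := hjinj ⟨(i', j'), hf'⟩ ⟨(i, j'), hf⟩ hS'' hS' rfl
      exact congrArg (fun e : ↥F => (e : Fin n × Fin n).1) this
  · rintro ⟨hR, h2, h3⟩
    have hjinj : ∀ e₁ e₂ : ↥F, Sum.inl e₁ ∈ S → Sum.inl e₂ ∈ S →
        (e₁ : Fin n × Fin n).2 = (e₂ : Fin n × Fin n).2 → e₁ = e₂ := by
      rintro ⟨⟨a₁, b₁⟩, hf₁⟩ ⟨⟨a₂, b₂⟩, hf₂⟩ h₁ h₂ hj
      simp only at hj
      subst hj
      have := (h3 b₁).unique ⟨hf₁, h₁⟩ ⟨hf₂, h₂⟩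
      subst this
      rfl
    have hiinj : ∀ e₁ e₂ : ↥F, Sum.inl e₁ ∈ S → Sum.inl e₂ ∈ S →
        (e₁ : Fin n × Fin n).1 = (e₂ : Fin n × Fin n).1 → e₁ = e₂ := by
      rintro ⟨⟨a₁, b₁⟩, hf₁⟩ ⟨⟨a₂, b₂⟩, hf₂⟩ h₁ h₂ hi
      simp only at hi
      subst hi
      have := (h2 a₁).unique ⟨hf₁, h₁⟩ ⟨hf₂, h₂⟩
      subst this
      rfl
    have hex : ∀ i : Fin n, ∃ e : ↥F, (e : Fin n × Fin n).1 = i ∧ Sum.inl e ∈ S := by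
      intro i
      obtain ⟨j, ⟨hf, hS'⟩, -⟩ := h2 i
      exact ⟨⟨(i, j), hf⟩, rfl, hS'⟩
    refine ⟨?_, ⟨bip_connected hR hex, bip_acyclic hR hiinj⟩⟩
    rw [minor_eq_one hjinj]
    exact one_ne_zero
end

section
/- With the partition construction of G and B: for every index set S ⊆ Fin m ⊕ Fin m containing all of E_r, S induces a spanning tree of G if and only if the set {j ∈ Fin m : Sum.inl j ∈ S} lies in 𝒞, i.e., meets every fiber P_i = g⁻¹(i) in exactly one element. -/
open scoped Classical

/-- The edge of the graph `G` associated with an edge index in `Fin m ⊕ Fin m`: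
the left edge `{v_{g j}, w_{g j, j}}` and the right edge `{w_{g j, j}, v_{g j + 1}}`. -/
def partEdge {n m : ℕ} (g : Fin m → Fin n) : (Fin m ⊕ Fin m) → Sym2 (Fin (n + 1) ⊕ Fin m)
  | Sum.inl j => s(Sum.inl (g j).castSucc, Sum.inr j)
  | Sum.inr j => s(Sum.inr j, Sum.inl (g j).succ)

/-- The spanning subgraph of `G` whose edges are those indexed by `S ⊆ Fin m ⊕ Fin m`. -/
def partSubgraph {n m : ℕ} (g : Fin m → Fin n) (S : Finset (Fin m ⊕ Fin m)) :
    SimpleGraph (Fin (n + 1) ⊕ Fin m) :=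
  SimpleGraph.fromEdgeSet (partEdge g '' ↑S)

/-- The matrix `B` of the construction: the left-left block is `A`, the right-right block is
the identity, and the off-diagonal blocks vanish. -/
def matB {m : ℕ} (A : Matrix (Fin m) (Fin m) ℝ) :
    Matrix (Fin m ⊕ Fin m) (Fin m ⊕ Fin m) ℝ :=
  Matrix.of fun p q =>
    match p, q with
    | Sum.inl j₁, Sum.inl j₂ => A j₁ j₂
    | Sum.inr j, Sum.inr j' => if j = j' then 1 else 0
    | _, _ => 0

/-- The set `E_ℓ` of left edge indices. -/
def leftIdx (m : ℕ) : Finset (Fin m ⊕ Fin m) := Finset.univ.image Sum.inl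

/-- The set `E_r` of right edge indices. -/
def rightIdx (m : ℕ) : Finset (Fin m ⊕ Fin m) := Finset.univ.image Sum.inr

lemma reachable_iff_of_invariant {V : Type*} {G : SimpleGraph V} (P : V → Prop)
    (h : ∀ a b, G.Adj a b → (P a ↔ P b)) {u v : V} (huv : G.Reachable u v) :
    P u ↔ P v := by
  obtain ⟨w⟩ := huv
  induction w with
  | nil => rfl
  | cons ha _ ih => exact (h _ _ ha).trans ih

lemma sdiff_fromEdgeSet_adj {V : Type*} (G : SimpleGraph V) (e : Sym2 V) {x y : V} :
    (G \ SimpleGraph.fromEdgeSet {e}).Adj x y ↔ G.Adj x y ∧ s(x, y) ≠ e := by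
  rw [SimpleGraph.sdiff_adj, SimpleGraph.fromEdgeSet_adj]
  constructor
  · rintro ⟨h1, h2⟩
    exact ⟨h1, fun he => h2 ⟨by simp [he], h1.ne⟩⟩
  · rintro ⟨h1, h2⟩
    exact ⟨h1, fun h => h2 (by simpa using h.1)⟩

lemma partSubgraph_adj_iff {n m : ℕ} (g : Fin m → Fin n) (S : Finset (Fin m ⊕ Fin m))
    {a b : Fin (n + 1) ⊕ Fin m} :
    (partSubgraph g S).Adj a b ↔
      (∃ j, Sum.inl j ∈ S ∧
        ((a = Sum.inl (g j).castSucc ∧ b = Sum.inr j) ∨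
         (b = Sum.inl (g j).castSucc ∧ a = Sum.inr j))) ∨
      (∃ j, Sum.inr j ∈ S ∧
        ((a = Sum.inr j ∧ b = Sum.inl (g j).succ) ∨
         (b = Sum.inr j ∧ a = Sum.inl (g j).succ))) := by
  rw [partSubgraph, SimpleGraph.fromEdgeSet_adj]
  constructor
  · rintro ⟨⟨e, heS, he⟩, hne⟩
    cases e with
    | inl j =>
      left
      refine ⟨j, heS, ?_⟩
      simp only [partEdge, Sym2.eq_iff] at he
      rcases he with ⟨h1, h2⟩ | ⟨h1, h2⟩
      · exact Or.inl ⟨h1.symm, h2.symm⟩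
      · exact Or.inr ⟨h1.symm, h2.symm⟩
    | inr j =>
      right
      refine ⟨j, heS, ?_⟩
      simp only [partEdge, Sym2.eq_iff] at he
      rcases he with ⟨h1, h2⟩ | ⟨h1, h2⟩
      · exact Or.inl ⟨h1.symm, h2.symm⟩
      · exact Or.inr ⟨h1.symm, h2.symm⟩
  · rintro (⟨j, hj, ⟨rfl, rfl⟩ | ⟨rfl, rfl⟩⟩ | ⟨j, hj, ⟨rfl, rfl⟩ | ⟨rfl, rfl⟩⟩)
    · exact ⟨⟨Sum.inl j, hj, rfl⟩, by simp⟩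
    · exact ⟨⟨Sum.inl j, hj, Sym2.eq_swap⟩, by simp⟩
    · exact ⟨⟨Sum.inr j, hj, rfl⟩, by simp⟩
    · exact ⟨⟨Sum.inr j, hj, Sym2.eq_swap⟩, by simp⟩

lemma partEdge_injective {n m : ℕ} (g : Fin m → Fin n) : Function.Injective (partEdge g) := by
  intro e e' h
  cases e with
  | inl j =>
    cases e' with
    | inl j' =>
      simp only [partEdge, Sym2.eq_iff, Sum.inl.injEq, Sum.inr.injEq, reduceCtorEq,
        and_false, false_and, or_false] at h
      exact congrArg _ h.2
    | inr j' =>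
      exfalso
      simp only [partEdge, Sym2.eq_iff, Sum.inl.injEq, Sum.inr.injEq, reduceCtorEq,
        false_and, false_or] at h
      have := congrArg Fin.val h.1
      simp [Fin.val_succ] at this
      rw [h.2] at this
      omega
  | inr j =>
    cases e' with
    | inl j' =>
      exfalso
      simp only [partEdge, Sym2.eq_iff, Sum.inl.injEq, Sum.inr.injEq, reduceCtorEq,
        false_and, and_false, false_or, or_false] at h
      have := congrArg Fin.val h.2
      simp [Fin.val_succ] at this
      rw [h.1] at this
      omega
    | inr j' =>
      simp only [partEdge, Sym2.eq_iff, Sum.inl.injEq, Sum.inr.injEq, reduceCtorEq,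
        and_false, false_and, or_false] at h
      exact congrArg _ h.1

lemma left_cut {n m : ℕ} (g : Fin m → Fin n) (S : Finset (Fin m ⊕ Fin m))
    (huniq : ∀ j j', Sum.inl j ∈ S → Sum.inl j' ∈ S → g j = g j' → j = j')
    (j₀ : Fin m) (hj₀ : Sum.inl j₀ ∈ S) :
    ¬ (partSubgraph g S \ SimpleGraph.fromEdgeSet {partEdge g (Sum.inl j₀)}).Reachable
      (Sum.inl (g j₀).castSucc) (Sum.inr j₀) := by
  intro hre
  have hP := reachable_iff_of_invariant
    (Sum.elim (fun k : Fin (n+1) => (k : ℕ) ≤ (g j₀ : ℕ))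
      (fun j : Fin m => (g j : ℕ) < (g j₀ : ℕ))) ?_ hre
  · simp at hP
  · intro x y hxy
    rw [sdiff_fromEdgeSet_adj] at hxy
    obtain ⟨hxy, hne⟩ := hxy
    rw [partSubgraph_adj_iff] at hxy
    rcases hxy with ⟨j, hj, ⟨rfl, rfl⟩ | ⟨rfl, rfl⟩⟩ | ⟨j, hj, ⟨rfl, rfl⟩ | ⟨rfl, rfl⟩⟩
    · have hjj : j ≠ j₀ := by
        rintro rfl
        exact hne rfl
      have : g j ≠ g j₀ := fun h => hjj (huniq j j₀ hj hj₀ h)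
      have : (g j : ℕ) ≠ (g j₀ : ℕ) := fun h => this (Fin.val_injective h)
      simp only [Sum.elim_inl, Sum.elim_inr, Fin.coe_castSucc]
      omega
    · have hjj : j ≠ j₀ := by
        rintro rfl
        exact hne Sym2.eq_swap
      have : g j ≠ g j₀ := fun h => hjj (huniq j j₀ hj hj₀ h)
      have : (g j : ℕ) ≠ (g j₀ : ℕ) := fun h => this (Fin.val_injective h)
      simp only [Sum.elim_inl, Sum.elim_inr, Fin.coe_castSucc]
      omega
    · simp only [Sum.elim_inl, Sum.elim_inr, Fin.val_succ]
      omega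
    · simp only [Sum.elim_inl, Sum.elim_inr, Fin.val_succ]
      omega

lemma right_cut_leaf {n m : ℕ} (g : Fin m → Fin n) (S : Finset (Fin m ⊕ Fin m))
    (j₀ : Fin m) (hj₀ : Sum.inl j₀ ∉ S) :
    ¬ (partSubgraph g S \ SimpleGraph.fromEdgeSet {partEdge g (Sum.inr j₀)}).Reachable
      (Sum.inr j₀) (Sum.inl (g j₀).succ) := by
  intro hre
  have hP := reachable_iff_of_invariant (fun x => x = Sum.inr j₀) ?_ hre
  · simp at hP
  · intro x y hxy
    rw [sdiff_fromEdgeSet_adj] at hxy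
    obtain ⟨hxy, hne⟩ := hxy
    rw [partSubgraph_adj_iff] at hxy
    rcases hxy with ⟨j, hj, ⟨rfl, rfl⟩ | ⟨rfl, rfl⟩⟩ | ⟨j, hj, ⟨rfl, rfl⟩ | ⟨rfl, rfl⟩⟩
    · have hjj : j ≠ j₀ := fun h => hj₀ (h ▸ hj)
      simp [hjj]
    · have hjj : j ≠ j₀ := fun h => hj₀ (h ▸ hj)
      simp [hjj]
    · have hjj : j ≠ j₀ := by
        rintro rfl
        exact hne rfl
      simp [hjj]
    · have hjj : j ≠ j₀ := by
        rintro rfl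
        exact hne Sym2.eq_swap
      simp [hjj]

lemma right_cut_spine {n m : ℕ} (g : Fin m → Fin n) (S : Finset (Fin m ⊕ Fin m))
    (huniq : ∀ j j', Sum.inl j ∈ S → Sum.inl j' ∈ S → g j = g j' → j = j')
    (j₀ : Fin m) (hj₀ : Sum.inl j₀ ∈ S) :
    ¬ (partSubgraph g S \ SimpleGraph.fromEdgeSet {partEdge g (Sum.inr j₀)}).Reachable
      (Sum.inr j₀) (Sum.inl (g j₀).succ) := by
  intro hre
  have hP := reachable_iff_of_invariant
    (Sum.elim (fun k : Fin (n+1) => (k : ℕ) ≤ (g j₀ : ℕ))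
      (fun j : Fin m => j = j₀ ∨ (g j : ℕ) < (g j₀ : ℕ))) ?_ hre
  · simp [Fin.val_succ] at hP
  · intro x y hxy
    rw [sdiff_fromEdgeSet_adj] at hxy
    obtain ⟨hxy, hne⟩ := hxy
    rw [partSubgraph_adj_iff] at hxy
    rcases hxy with ⟨j, hj, ⟨rfl, rfl⟩ | ⟨rfl, rfl⟩⟩ | ⟨j, hj, ⟨rfl, rfl⟩ | ⟨rfl, rfl⟩⟩
    · by_cases hjj : j = j₀
      · subst hjj
        simp
      · have : g j ≠ g j₀ := fun h => hjj (huniq j j₀ hj hj₀ h)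
        have : (g j : ℕ) ≠ (g j₀ : ℕ) := fun h => this (Fin.val_injective h)
        simp only [Sum.elim_inl, Sum.elim_inr, Fin.coe_castSucc, hjj, false_or]
        omega
    · by_cases hjj : j = j₀
      · subst hjj
        simp
      · have : g j ≠ g j₀ := fun h => hjj (huniq j j₀ hj hj₀ h)
        have : (g j : ℕ) ≠ (g j₀ : ℕ) := fun h => this (Fin.val_injective h)
        simp only [Sum.elim_inl, Sum.elim_inr, Fin.coe_castSucc, hjj, false_or]
        omega
    · have hjj : j ≠ j₀ := by
        rintro rfl
        exact hne rfl
      simp only [Sum.elim_inl, Sum.elim_inr, Fin.val_succ, hjj, false_or]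
      omega
    · have hjj : j ≠ j₀ := by
        rintro rfl
        exact hne Sym2.eq_swap
      simp only [Sum.elim_inl, Sum.elim_inr, Fin.val_succ, hjj, false_or]
      omega

/-- For the partition construction: if `S` contains all right edge indices, then `S` induces
a spanning tree of `G` iff `{j : Sum.inl j ∈ S}` meets every fiber `P_i = g⁻¹(i)` in exactly
one element. -/
theorem part_spanningTree_iff_transversal {n m : ℕ} (hn : 1 ≤ n) (hm : 1 ≤ m)
    (g : Fin m → Fin n) (hg : Function.Surjective g)
    (S : Finset (Fin m ⊕ Fin m)) (hS : rightIdx m ⊆ S) :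
    (partSubgraph g S).IsTree ↔
      ∀ i : Fin n, ∃! j : Fin m, Sum.inl j ∈ S ∧ g j = i := by
  classical
  set T : Finset (Fin m) := Finset.univ.filter (fun j => Sum.inl j ∈ S) with hTdef
  have hTmem : ∀ j : Fin m, j ∈ T ↔ Sum.inl j ∈ S := fun j => by simp [hTdef]
  have hRmem : ∀ j : Fin m, Sum.inr j ∈ S := fun j =>
    hS (Finset.mem_image.mpr ⟨j, Finset.mem_univ _, rfl⟩)
  have hSdecomp : S = T.image Sum.inl ∪ rightIdx m := by
    ext x
    cases x with
    | inl j =>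
      simp only [Finset.mem_union, Finset.mem_image, Finset.mem_univ, true_and, rightIdx]
      constructor
      · intro hx
        exact Or.inl ⟨j, (hTmem j).mpr hx, rfl⟩
      · rintro (⟨j', hj', h⟩ | ⟨j', h⟩)
        · cases h
          exact (hTmem j).mp hj'
        · simp at h
    | inr j =>
      simp only [Finset.mem_union, Finset.mem_image, Finset.mem_univ, true_and, rightIdx]
      exact ⟨fun _ => Or.inr ⟨j, rfl⟩, fun _ => hRmem j⟩
  have hScard : S.card = T.card + m := by
    rw [hSdecomp, Finset.card_union_of_disjoint, rightIdx,
      Finset.card_image_of_injective _ Sum.inl_injective,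
      Finset.card_image_of_injective _ Sum.inr_injective, Finset.card_univ, Fintype.card_fin]
    rw [Finset.disjoint_left]
    rintro x hx hx'
    obtain ⟨j, _, rfl⟩ := Finset.mem_image.mp hx
    obtain ⟨j', _, h⟩ := Finset.mem_image.mp hx'
    simp at h
  have hedge : (partSubgraph g S).edgeFinset = S.image (partEdge g) := by
    ext e
    rw [SimpleGraph.mem_edgeFinset]
    simp only [SimpleGraph.mem_edgeFinset, partSubgraph, SimpleGraph.edgeSet_fromEdgeSet,
      Set.mem_diff, Set.mem_image, Finset.mem_coe, Set.mem_setOf_eq, Finset.mem_image]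
    constructor
    · rintro ⟨⟨x, hx, rfl⟩, _⟩
      exact ⟨x, hx, rfl⟩
    · rintro ⟨x, hx, rfl⟩
      refine ⟨⟨x, hx, rfl⟩, ?_⟩
      cases x <;> simp [partEdge, Sym2.mk_isDiag_iff]
  have hecard : (partSubgraph g S).edgeFinset.card = T.card + m := by
    rw [hedge, Finset.card_image_of_injective _ (partEdge_injective g), hScard]
  have hVcard : Fintype.card (Fin (n + 1) ⊕ Fin m) = n + 1 + m := by simp
  constructor
  · intro hG
    have hex : ∀ i : Fin n, ∃ j, Sum.inl j ∈ S ∧ g j = i := by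
      intro i
      by_contra hno
      push_neg at hno
      have hre := hG.isConnected.preconnected (Sum.inl (0 : Fin (n + 1))) (Sum.inl i.succ)
      have hP := reachable_iff_of_invariant
        (Sum.elim (fun k : Fin (n + 1) => (k : ℕ) ≤ (i : ℕ))
          (fun j : Fin m => (g j : ℕ) < (i : ℕ))) ?_ hre
      · simp only [Sum.elim_inl, Fin.val_zero, Fin.val_succ] at hP
        omega
      · intro x y hxy
        rw [partSubgraph_adj_iff] at hxy
        rcases hxy with ⟨j, hj, ⟨rfl, rfl⟩ | ⟨rfl, rfl⟩⟩ | ⟨j, hj, ⟨rfl, rfl⟩ | ⟨rfl, rfl⟩⟩ <;>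
          simp only [Sum.elim_inl, Sum.elim_inr, Fin.coe_castSucc, Fin.val_succ]
        · have : (g j : ℕ) ≠ (i : ℕ) := fun h => hno j hj (Fin.val_injective h)
          omega
        · have : (g j : ℕ) ≠ (i : ℕ) := fun h => hno j hj (Fin.val_injective h)
          omega
        · omega
        · omega
    have hcard := hG.card_edgeFinset
    rw [hecard, hVcard] at hcard
    have hTcard : T.card = n := by omega
    have hinj : Set.InjOn g ↑T := by
      apply Finset.card_image_iff.mp
      have himg : T.image g = Finset.univ := by
        apply Finset.eq_univ_of_forall
        intro i
        obtain ⟨j, hj1, hj2⟩ := hex i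
        exact Finset.mem_image.mpr ⟨j, (hTmem j).mpr hj1, hj2⟩
      rw [himg, Finset.card_univ, Fintype.card_fin, hTcard]
    intro i
    obtain ⟨j, hj1, hj2⟩ := hex i
    refine ⟨j, ⟨hj1, hj2⟩, ?_⟩
    rintro j' ⟨hj'1, hj'2⟩
    exact hinj (Finset.mem_coe.mpr ((hTmem j').mpr hj'1)) (Finset.mem_coe.mpr ((hTmem j).mpr hj1))
      (hj'2.trans hj2.symm)
  · intro htrans
    choose c hc hu using htrans
    have huniq : ∀ j j', Sum.inl j ∈ S → Sum.inl j' ∈ S → g j = g j' → j = j' := by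
      intro j j' h1 h2 h3
      exact (hu (g j') j ⟨h1, h3⟩).trans (hu (g j') j' ⟨h2, rfl⟩).symm
    have hadjL : ∀ j, Sum.inl j ∈ S →
        (partSubgraph g S).Adj (Sum.inl (g j).castSucc) (Sum.inr j) := by
      intro j hj
      rw [partSubgraph_adj_iff]
      exact Or.inl ⟨j, hj, Or.inl ⟨rfl, rfl⟩⟩
    have hadjR : ∀ j, (partSubgraph g S).Adj (Sum.inr j) (Sum.inl (g j).succ) := by
      intro j
      rw [partSubgraph_adj_iff]
      exact Or.inr ⟨j, hRmem j, Or.inl ⟨rfl, rfl⟩⟩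
    have hreach : ∀ k : Fin (n + 1), (partSubgraph g S).Reachable (Sum.inl 0) (Sum.inl k) := by
      intro k
      induction k using Fin.induction with
      | zero => exact SimpleGraph.Reachable.refl _
      | succ i ih =>
        have h1 := hadjL (c i) (hc i).1
        have h2 := hadjR (c i)
        rw [(hc i).2] at h1 h2
        exact ih.trans (h1.reachable.trans h2.reachable)
    have hall : ∀ x, (partSubgraph g S).Reachable (Sum.inl 0) x := by
      intro x
      cases x with
      | inl k => exact hreach k
      | inr j => exact (hreach (g j).succ).trans (hadjR j).reachable.symm
    constructor
    · rw [SimpleGraph.connected_iff]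
      exact ⟨fun u v => (hall u).symm.trans (hall v), ⟨Sum.inl 0⟩⟩
    · rw [SimpleGraph.isAcyclic_iff_forall_adj_isBridge]
      intro a b hab
      rw [SimpleGraph.isBridge_iff]
      refine ?_
      rw [partSubgraph_adj_iff] at hab
      rcases hab with ⟨j, hj, ⟨rfl, rfl⟩ | ⟨rfl, rfl⟩⟩ | ⟨j, hj, ⟨rfl, rfl⟩ | ⟨rfl, rfl⟩⟩
      · exact left_cut g S huniq j hj
      · intro hre
        have he : s(Sum.inr j, Sum.inl (g j).castSucc) = partEdge g (Sum.inl j) := Sym2.eq_swap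
        rw [he] at hre
        exact left_cut g S huniq j hj hre.symm
      · by_cases hjS : Sum.inl j ∈ S
        · exact right_cut_spine g S huniq j hjS
        · exact right_cut_leaf g S j hjS
      · intro hre
        have he : s(Sum.inl (g j).succ, Sum.inr j) = partEdge g (Sum.inr j) := Sym2.eq_swap
        rw [he] at hre
        by_cases hjS : Sum.inl j ∈ S
        · exact right_cut_spine g S huniq j hjS hre.symm
        · exact right_cut_leaf g S j hjS hre.symm
end

section
/- With the partition construction of G and B: for every index set S ⊆ Fin m ⊕ Fin m containing all of E_r, [S induces a forest of G and |S ∩ E_ℓ| = n] if and only if the set {j ∈ Fin m : Sum.inl j ∈ S} lies in 𝒞, i.e., meets every fiber P_i = g⁻¹(i) in exactly one element. -/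
open scoped Classical

lemma acyclic_of_up_unique {V : Type*} {G : SimpleGraph V} (f : V → ℕ)
    (h1 : ∀ {a b : V}, G.Adj a b → f a ≠ f b)
    (h2 : ∀ {v a b : V}, G.Adj v a → G.Adj v b → f v < f a → f v < f b → a = b) :
    G.IsAcyclic := by
  intro v c hc
  have hlen := hc.three_le_length
  have hne : c.support.tail ≠ [] := by
    have h5 : c.support.length = c.length + 1 := SimpleGraph.Walk.length_support c
    intro h
    have : c.support.tail.length = 0 := by rw [h]; rfl
    rw [List.length_tail, h5] at this
    omega
  obtain ⟨u, hu, hmin⟩ := Finset.exists_min_image c.support.tail.toFinset f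
    ⟨c.support.tail.head hne, List.mem_toFinset.mpr (List.head_mem hne)⟩
  rw [List.mem_toFinset] at hu
  have hmin' : ∀ x ∈ c.support.tail, f u ≤ f x := fun x hx =>
    hmin x (List.mem_toFinset.mpr hx)
  have hu' : u ∈ c.support := List.mem_of_mem_tail hu
  set c' := c.rotate u hu' with hc'def
  have hc' : c'.IsCycle := hc.rotate hu'
  have hrot := SimpleGraph.Walk.support_rotate c u hu'
  have hmem : ∀ x ∈ c'.support.tail, f u ≤ f x := fun x hx =>
    hmin' x (hrot.mem_iff.mp hx)
  have hnotnil : ¬ c'.Nil := by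
    rw [SimpleGraph.Walk.not_nil_iff_lt_length]
    have := hc'.three_le_length; omega
  obtain ⟨b, hadj, q, hq⟩ := SimpleGraph.Walk.not_nil_iff.mp hnotnil
  rw [hq] at hc' hmem
  obtain ⟨hqpath, -⟩ := (SimpleGraph.Walk.cons_isCycle_iff q hadj).mp hc'
  have hql : 2 ≤ q.length := by
    have := hc'.three_le_length; simp at this; omega
  have hqsupp : ∀ x ∈ q.support, f u ≤ f x := by
    intro x hx; exact hmem x (by simpa using hx)
  have hub : f u < f b :=
    (hqsupp b q.start_mem_support).lt_of_ne (h1 hadj)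
  set r := q.reverse with hrdef
  have hrpath : r.IsPath := hqpath.reverse
  have hrnotnil : ¬ r.Nil := by
    rw [SimpleGraph.Walk.not_nil_iff_lt_length, SimpleGraph.Walk.length_reverse]; omega
  have hadj2 : G.Adj u (r.getVert 1) := SimpleGraph.Walk.adj_snd hrnotnil
  have hcmem : r.getVert 1 ∈ q.support := by
    have h3 : r.getVert 1 ∈ r.tail.support := r.tail.start_mem_support
    have h4 : r.getVert 1 ∈ r.support := by
      rw [← SimpleGraph.Walk.cons_support_tail hrnotnil]
      exact List.mem_cons_of_mem _ h3
    rw [hrdef, SimpleGraph.Walk.support_reverse, List.mem_reverse] at h4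
    exact h4
  have huc : f u < f (r.getVert 1) :=
    (hqsupp _ hcmem).lt_of_ne (h1 hadj2)
  have hbc : b = r.getVert 1 := h2 hadj hadj2 hub huc
  -- contradiction: r.tail is a path from b to b of positive length
  have ht : (r.tail.copy hbc.symm rfl).IsPath :=
    (SimpleGraph.Walk.isPath_copy _ _ _).mpr hrpath.tail
  have := SimpleGraph.Walk.isPath_iff_eq_nil.mp ht
  have hlen0 : (r.tail.copy hbc.symm rfl).length = 0 := by rw [this]; rfl
  rw [SimpleGraph.Walk.length_copy] at hlen0
  have : r.tail.length + 1 = r.length := SimpleGraph.Walk.length_tail_add_one hrnotnil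
  rw [SimpleGraph.Walk.length_reverse] at this
  omega

lemma partSubgraph_adj {n m : ℕ} (g : Fin m → Fin n) (S : Finset (Fin m ⊕ Fin m))
    {x y : Fin (n + 1) ⊕ Fin m} :
    (partSubgraph g S).Adj x y ↔ ∃ e ∈ S, partEdge g e = s(x, y) := by
  rw [partSubgraph, SimpleGraph.fromEdgeSet_adj]
  constructor
  · rintro ⟨⟨e, he, heq⟩, -⟩
    exact ⟨e, he, heq⟩
  · rintro ⟨e, he, heq⟩
    refine ⟨⟨e, he, heq⟩, ?_⟩
    cases e with
    | inl j =>
      rw [partEdge, Sym2.eq_iff] at heq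
      rcases heq with ⟨h1, h2⟩ | ⟨h1, h2⟩ <;> (subst h1; subst h2; simp)
    | inr j =>
      rw [partEdge, Sym2.eq_iff] at heq
      rcases heq with ⟨h1, h2⟩ | ⟨h1, h2⟩ <;> (subst h1; subst h2; simp)

lemma partSubgraph_adj_cases {n m : ℕ} (g : Fin m → Fin n) (S : Finset (Fin m ⊕ Fin m))
    {x y : Fin (n + 1) ⊕ Fin m} (h : (partSubgraph g S).Adj x y) :
    (∃ j, Sum.inl j ∈ S ∧ x = Sum.inl (g j).castSucc ∧ y = Sum.inr j) ∨
    (∃ j, Sum.inl j ∈ S ∧ x = Sum.inr j ∧ y = Sum.inl (g j).castSucc) ∨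
    (∃ j, x = Sum.inr j ∧ y = Sum.inl (g j).succ) ∨
    (∃ j, x = Sum.inl (g j).succ ∧ y = Sum.inr j) := by
  obtain ⟨e, he, heq⟩ := (partSubgraph_adj g S).mp h
  cases e with
  | inl j =>
    rw [partEdge, Sym2.eq_iff] at heq
    rcases heq with ⟨h1, h2⟩ | ⟨h1, h2⟩
    · exact Or.inl ⟨j, he, h1.symm, h2.symm⟩
    · exact Or.inr (Or.inl ⟨j, he, h2.symm, h1.symm⟩)
  | inr j =>
    rw [partEdge, Sym2.eq_iff] at heq
    rcases heq with ⟨h1, h2⟩ | ⟨h1, h2⟩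
    · exact Or.inr (Or.inr (Or.inl ⟨j, h1.symm, h2.symm⟩))
    · exact Or.inr (Or.inr (Or.inr ⟨j, h2.symm, h1.symm⟩))

/-- For the partition construction: if `S` contains all right edge indices, then `S` induces
a forest of `G` with `|S ∩ E_ℓ| = n` iff `{j : Sum.inl j ∈ S}` meets every fiber
`P_i = g⁻¹(i)` in exactly one element. -/
theorem part_forest_iff_transversal {n m : ℕ} (hn : 1 ≤ n) (hm : 1 ≤ m)
    (g : Fin m → Fin n) (hg : Function.Surjective g)
    (S : Finset (Fin m ⊕ Fin m)) (hS : rightIdx m ⊆ S) :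
    ((partSubgraph g S).IsAcyclic ∧ (S ∩ leftIdx m).card = n) ↔
      ∀ i : Fin n, ∃! j : Fin m, Sum.inl j ∈ S ∧ g j = i := by
  classical
  set T : Finset (Fin m) := Finset.univ.filter (fun j => Sum.inl j ∈ S) with hTdef
  have hTmem : ∀ j : Fin m, j ∈ T ↔ Sum.inl j ∈ S := by
    intro j; simp [hTdef]
  have hcardeq : (S ∩ leftIdx m).card = T.card := by
    have : S ∩ leftIdx m = T.image Sum.inl := by
      ext e
      cases e with
      | inl j => simp [leftIdx, hTdef]
      | inr j => simp [leftIdx, hTdef]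
    rw [this, Finset.card_image_of_injective _ Sum.inl_injective]
  have hleft : ∀ j : Fin m, Sum.inl j ∈ S →
      (partSubgraph g S).Adj (Sum.inl (g j).castSucc) (Sum.inr j) :=
    fun j hj => (partSubgraph_adj g S).mpr ⟨Sum.inl j, hj, rfl⟩
  have hright : ∀ j : Fin m,
      (partSubgraph g S).Adj (Sum.inr j) (Sum.inl (g j).succ) :=
    fun j => (partSubgraph_adj g S).mpr
      ⟨Sum.inr j, hS (Finset.mem_image.mpr ⟨j, Finset.mem_univ j, rfl⟩), rfl⟩
  constructor
  · rintro ⟨hac, hcard⟩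
    have hinj : ∀ j1 j2 : Fin m, Sum.inl j1 ∈ S → Sum.inl j2 ∈ S → g j1 = g j2 → j1 = j2 := by
      intro j1 j2 h1 h2 hgg
      by_contra hne
      have a1 := hleft j1 h1
      have a2 := hright j1
      have a3 : (partSubgraph g S).Adj (Sum.inl (g j1).succ) (Sum.inr j2) := by
        rw [hgg]; exact (hright j2).symm
      have a4 : (partSubgraph g S).Adj (Sum.inr j2) (Sum.inl (g j1).castSucc) := by
        rw [hgg]; exact (hleft j2 h2).symm
      refine hac (.cons a1 (.cons a2 (.cons a3 (.cons a4 .nil)))) ?_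
      rw [SimpleGraph.Walk.isCycle_def]
      refine ⟨?_, by simp, ?_⟩
      · rw [SimpleGraph.Walk.isTrail_def]
        simp only [SimpleGraph.Walk.edges_cons, SimpleGraph.Walk.edges_nil]
        simp [Sym2.eq_iff, hne, Ne.symm hne, (Fin.castSucc_lt_succ (i := g j1)).ne,
          (Fin.castSucc_lt_succ (i := g j1)).ne']
      · simp only [SimpleGraph.Walk.support_cons, SimpleGraph.Walk.support_nil,
          List.tail_cons]
        simp [hne, Ne.symm hne, (Fin.castSucc_lt_succ (i := g j1)).ne,
          (Fin.castSucc_lt_succ (i := g j1)).ne']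
    have hTcard : T.card = n := by rw [← hcardeq]; exact hcard
    have himg : T.image g = Finset.univ := by
      apply Finset.eq_univ_of_card
      rw [Finset.card_image_of_injOn, hTcard, Fintype.card_fin]
      intro j1 hj1 j2 hj2 hgg
      exact hinj j1 j2 ((hTmem j1).mp hj1) ((hTmem j2).mp hj2) hgg
    intro i
    have : i ∈ T.image g := by rw [himg]; exact Finset.mem_univ i
    obtain ⟨j, hj, hji⟩ := Finset.mem_image.mp this
    refine ⟨j, ⟨(hTmem j).mp hj, hji⟩, ?_⟩
    rintro j' ⟨hj', hji'⟩
    exact hinj j' j hj' ((hTmem j).mp hj) (by rw [hji, hji'])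
  · intro htr
    constructor
    · apply acyclic_of_up_unique
        (f := Sum.elim (fun i : Fin (n + 1) => 2 * i.val) (fun j : Fin m => 2 * (g j).val + 1))
      · intro a b hab
        rcases partSubgraph_adj_cases g S hab with
          ⟨j, hj, ha, hb⟩ | ⟨j, hj, ha, hb⟩ | ⟨j, ha, hb⟩ | ⟨j, ha, hb⟩ <;>
          subst ha <;> subst hb <;> simp <;> omega
      · intro v a b hva hvb hfa hfb
        rcases partSubgraph_adj_cases g S hva with
          ⟨j1, hj1, hv1, ha⟩ | ⟨j1, hj1, hv1, ha⟩ | ⟨j1, hv1, ha⟩ | ⟨j1, hv1, ha⟩ <;>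
        rcases partSubgraph_adj_cases g S hvb with
          ⟨j2, hj2, hv2, hb⟩ | ⟨j2, hj2, hv2, hb⟩ | ⟨j2, hv2, hb⟩ | ⟨j2, hv2, hb⟩ <;>
          subst ha <;> subst hb <;> subst hv1 <;>
          simp only [Sum.elim_inl, Sum.elim_inr, Fin.coe_castSucc, Fin.val_succ]
            at hfa hfb <;>
          first
          | omega
          | (exact absurd hv2 Sum.inl_ne_inr)
          | (exact absurd hv2 Sum.inr_ne_inl)
          | (rw [Sum.inr.injEq] at hv2; subst hv2; first | rfl | (exfalso; omega))
          | (rw [Sum.inl.injEq, Fin.castSucc_inj] at hv2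
             exact congrArg Sum.inr ((htr (g j1)).unique ⟨hj1, rfl⟩ ⟨hj2, hv2.symm⟩))
          | (rw [Sum.inl.injEq, Fin.ext_iff] at hv2
             simp only [Fin.coe_castSucc, Fin.val_succ] at hv2
             omega)
    · rw [hcardeq]
      rw [← Fintype.card_fin n]
      rw [← Finset.card_univ]
      apply Finset.card_bij (fun j _ => g j)
      · intro a ha; exact Finset.mem_univ _
      · intro j1 hj1 j2 hj2 hgg
        exact (htr (g j1)).unique ⟨(hTmem j1).mp hj1, rfl⟩ ⟨(hTmem j2).mp hj2, hgg.symm⟩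
      · intro i _
        obtain ⟨j, ⟨hj, hji⟩, -⟩ := htr i
        exact ⟨j, (hTmem j).mpr hj, hji⟩
end
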